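/- Let C be a compact strictly convex body in the Euclidean plane. If for every exterior point S the two tangent segments from S to C have equal length (i.e., every cap of C is isosceles), then C is a closed disc. -/

import Mathlib

open scoped RealInnerProductSpace

local notation "E2" => EuclideanSpace ℝ (Fin 2)

lemma inner2 (x y : E2) : ⟪x, y⟫ = x 0 * y 0 + x 1 * y 1 := by
  simp [PiLp.inner_apply, Fin.sum_univ_two, RCLike.inner_apply, mul_comm]

lemma norm2 (x : E2) : ‖x‖ ^ 2 = x 0 ^ 2 + x 1 ^ 2 := by
  rw [← real_inner_self_eq_norm_sq, inner2]; ring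

lemma vec_ext {v1 v2 u1 u2 : E2} {r : ℝ}
    (k0 : v1 0 - v2 0 = r * (u1 0 - u2 0)) (k1 : v1 1 - v2 1 = r * (u1 1 - u2 1)) :
    v1 - v2 = r • (u1 - u2) := by
  ext i
  fin_cases i
  · simpa using k0
  · simpa using k1

lemma rearr {A B x y : E2} {r : ℝ} (h : A - B = r • (x - y)) :
    B = (A - r • x) + r • y := by
  have h2 : B = A - r • (x - y) := by rw [← h]; abel
  rw [h2]; rw [smul_sub]; abel

lemma subpt (O x y : E2) (r : ℝ) : (O + r • x) - (O + r • y) = r • (x - y) := by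
  rw [smul_sub]; abel

lemma max_unique {C : Set E2} (hstrict : StrictConvex ℝ C) {u P Q : E2}
    (hu : u ≠ 0) (hP : P ∈ C) (hQ : Q ∈ C)
    (hmaxP : ∀ x ∈ C, ⟪x, u⟫ ≤ ⟪P, u⟫) (hPQ : ⟪Q, u⟫ = ⟪P, u⟫) : Q = P := by
  by_contra h
  have hm : (1/2 : ℝ) • Q + (1/2 : ℝ) • P ∈ interior C :=
    hstrict hQ hP h (by norm_num) (by norm_num) (by norm_num)
  set m := (1/2 : ℝ) • Q + (1/2 : ℝ) • P with hmdef
  obtain ⟨ε, hε, hball⟩ := Metric.mem_nhds_iff.mp (mem_interior_iff_mem_nhds.mp hm)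
  have hu' : 0 < ‖u‖ := norm_pos_iff.mpr hu
  set δ := ε / (2 * ‖u‖) with hδdef
  have hδ : 0 < δ := by positivity
  have hx : m + δ • u ∈ C := by
    apply hball
    simp only [Metric.mem_ball, dist_eq_norm, add_sub_cancel_left, norm_smul,
      Real.norm_eq_abs, abs_of_pos hδ]
    rw [hδdef, div_mul_eq_mul_div, div_lt_iff₀ (by positivity)]
    nlinarith
  have h1 : ⟪m + δ • u, u⟫ = ⟪P, u⟫ + δ * ‖u‖^2 := by
    rw [inner_add_left, real_inner_smul_left, real_inner_self_eq_norm_sq, hmdef,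
      inner_add_left, real_inner_smul_left, real_inner_smul_left, hPQ]
    ring
  have h2 := hmaxP _ hx
  rw [h1] at h2
  have : 0 < δ * ‖u‖^2 := by positivity
  linarith

lemma exists_max {C : Set E2} (hcomp : IsCompact C) (hne : C.Nonempty) (u : E2) :
    ∃ P ∈ C, ∀ x ∈ C, ⟪x, u⟫ ≤ ⟪P, u⟫ := by
  have hc : Continuous (fun x : E2 => ⟪x, u⟫) := Continuous.inner continuous_id continuous_const
  obtain ⟨P, hP, hmax⟩ := hcomp.exists_isMaxOn hne hc.continuousOn
  exact ⟨P, hP, fun x hx => hmax hx⟩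

lemma cocycle {u1 u2 u3 : E2} (h1 : ‖u1‖ = 1) (h2 : ‖u2‖ = 1) (h3 : ‖u3‖ = 1)
    (h12 : u1 ≠ u2) (h13 : u1 ≠ u3) (h23 : u2 ≠ u3) {a c : ℝ}
    (h : a • (u1 - u2) + c • (u3 - u2) = 0) : a = 0 ∧ c = 0 := by
  have hkey : a • u1 + c • u3 = (a + c) • u2 := by
    have h' := h; rw [smul_sub, smul_sub] at h'
    rw [add_smul]
    linear_combination (norm := abel) h'
  have hn : ‖a • u1 + c • u3‖^2 = ‖(a+c) • u2‖^2 := by rw [hkey]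
  have e1 : ‖a • u1 + c • u3‖^2 = a^2 + 2*a*c*⟪u1,u3⟫ + c^2 := by
    rw [norm_add_sq_real, norm_smul, norm_smul, real_inner_smul_left, real_inner_smul_right,
      h1, h3]
    simp only [Real.norm_eq_abs, mul_one]
    rw [sq_abs, sq_abs]; ring
  have e2 : ‖(a+c) • u2‖^2 = (a+c)^2 := by
    rw [norm_smul, h2]; simp only [Real.norm_eq_abs, mul_one, sq_abs]
  have hlt : ⟪u1,u3⟫ < 1 := by
    have hs : ‖u1 - u3‖^2 = 2 - 2*⟪u1,u3⟫ := by
      rw [norm_sub_sq_real, h1, h3]; ring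
    have hne : u1 - u3 ≠ 0 := sub_ne_zero.mpr h13
    have : 0 < ‖u1 - u3‖^2 := by have := norm_pos_iff.mpr hne; positivity
    linarith
  have heq : a*c*(⟪u1,u3⟫ - 1) = 0 := by nlinarith [hn, e1, e2]
  have hac : a * c = 0 := by
    rcases mul_eq_zero.mp heq with h' | h'
    · exact h'
    · exact absurd (by linarith : (⟪u1,u3⟫:ℝ) = 1) (by linarith)
  rcases mul_eq_zero.mp hac with ha | hc
  · subst ha
    simp only [zero_smul, zero_add] at h
    rcases smul_eq_zero.mp h with h' | h'
    · exact ⟨rfl, h'⟩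
    · exact absurd (sub_eq_zero.mp h') (Ne.symm h23) |> False.elim
  · subst hc
    simp only [zero_smul, add_zero] at h
    rcases smul_eq_zero.mp h with h' | h'
    · exact ⟨h', rfl⟩
    · exact absurd (sub_eq_zero.mp h') h12 |> False.elim

lemma exists_unit_avoid (F : Set E2) (hF : F.Finite) :
    ∃ u : E2, ‖u‖ = 1 ∧ u ∉ F := by
  set g : ℝ → E2 := fun t => (Real.sqrt (1 + t^2))⁻¹ • (EuclideanSpace.single 0 (1:ℝ) + t • EuclideanSpace.single 1 (1:ℝ)) with hg
  have hcoord : ∀ t : ℝ, (g t) 0 = (Real.sqrt (1 + t^2))⁻¹ ∧ (g t) 1 = (Real.sqrt (1 + t^2))⁻¹ * t := by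
    intro t
    constructor <;>
    · simp [hg, PiLp.smul_apply, PiLp.add_apply, EuclideanSpace.single_apply]
  have hsq : ∀ t : ℝ, 0 < Real.sqrt (1 + t^2) := fun t => Real.sqrt_pos.mpr (by positivity)
  have hunit : ∀ t : ℝ, ‖g t‖ = 1 := by
    intro t
    have h2 : ‖g t‖^2 = 1 := by
      rw [norm2, (hcoord t).1, (hcoord t).2]
      have h3 : Real.sqrt (1 + t^2) ^ 2 = 1 + t^2 := Real.sq_sqrt (by positivity)
      have h4 := hsq t
      field_simp
      linarith [h3]
    have := abs_of_nonneg (norm_nonneg (g t))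
    nlinarith [norm_nonneg (g t)]
  have hinj : Function.Injective g := by
    intro s t hst
    have h0 := congrArg (fun z : E2 => z 0) hst
    have h1 := congrArg (fun z : E2 => z 1) hst
    simp only at h0 h1
    rw [(hcoord s).1, (hcoord t).1] at h0
    rw [(hcoord s).2, (hcoord t).2] at h1
    rw [h0] at h1
    exact mul_left_cancel₀ (by positivity) h1
  obtain ⟨u, hu, hnot⟩ := (Set.infinite_range_of_injective hinj).exists_notMem_finite hF
  obtain ⟨t, rfl⟩ := hu
  exact ⟨g t, hunit t, hnot⟩

/-- The line through `S` and `P` is a supporting (tangent) line of the convex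
body `C`, touching it at `P`. -/
def IsTangentAt (C : Set (EuclideanSpace ℝ (Fin 2)))
    (S P : EuclideanSpace ℝ (Fin 2)) : Prop :=
  P ∈ C ∧ ∃ f : EuclideanSpace ℝ (Fin 2) →ₗ[ℝ] ℝ,
    f ≠ 0 ∧ f S = f P ∧ ∀ x ∈ C, f x ≤ f P

lemma tangent_of_max {C : Set E2} {u P S : E2} (hu : ‖u‖ = 1) (hP : P ∈ C)
    (hmax : ∀ x ∈ C, ⟪x, u⟫ ≤ ⟪P, u⟫) (hS : ⟪S, u⟫ = ⟪P, u⟫) :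
    IsTangentAt C S P := by
  refine ⟨hP, (innerSL ℝ u).toLinearMap, ?_, ?_, ?_⟩
  · intro hf
    have h0 : ((innerSL ℝ u).toLinearMap) u = 0 := by rw [hf]; rfl
    simp only [ContinuousLinearMap.coe_coe, innerSL_apply_apply] at h0
    rw [real_inner_self_eq_norm_sq, hu] at h0
    norm_num at h0
  · simp only [ContinuousLinearMap.coe_coe, innerSL_apply_apply]
    rw [real_inner_comm S u, real_inner_comm P u]; exact hS
  · intro x hx
    simp only [ContinuousLinearMap.coe_coe, innerSL_apply_apply]
    rw [real_inner_comm x u, real_inner_comm P u]; exact hmax x hx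
set_option maxHeartbeats 1000000 in
lemma pair_lemma {C : Set E2} (hstrict : StrictConvex ℝ C)
    (hiso : ∀ S ∉ C, ∀ P Q : EuclideanSpace ℝ (Fin 2),
      IsTangentAt C S P → IsTangentAt C S Q → dist S P = dist S Q)
    {u1 u2 P1 P2 : E2} (hu1 : ‖u1‖ = 1) (hu2 : ‖u2‖ = 1)
    (hne : u1 ≠ u2) (hne' : u1 ≠ -u2)
    (hP1 : P1 ∈ C) (hP2 : P2 ∈ C)
    (hmax1 : ∀ x ∈ C, ⟪x, u1⟫ ≤ ⟪P1, u1⟫)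
    (hmax2 : ∀ x ∈ C, ⟪x, u2⟫ ≤ ⟪P2, u2⟫) :
    ∃ ρ : ℝ, 0 ≤ ρ ∧ P1 - P2 = ρ • (u1 - u2) := by
  by_cases hPP : P1 = P2
  · exact ⟨0, le_refl 0, by rw [hPP, sub_self, zero_smul]⟩
  have hA : u1 0 ^ 2 + u1 1 ^ 2 = 1 := by rw [← norm2, hu1]; norm_num
  have hB : u2 0 ^ 2 + u2 1 ^ 2 = 1 := by rw [← norm2, hu2]; norm_num
  set a := u1 0 with ha; set b := u1 1 with hb; set p := u2 0 with hp; set q := u2 1 with hq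
  set c : ℝ := ⟪u1, u2⟫ with hc
  have hcab : c = a * p + b * q := by rw [hc, inner2]
  set σ : ℝ := a * q - b * p with hσdef
  have hcσ : c ^ 2 + σ ^ 2 = 1 := by
    rw [hcab, hσdef]; linear_combination (p^2 + q^2) * hA + hB
  have hσ : σ ≠ 0 := by
    intro h0
    have hc2 : (c - 1) * (c + 1) = 0 := by nlinarith
    rcases mul_eq_zero.mp hc2 with h1 | h1
    · apply hne
      have : ‖u1 - u2‖ ^ 2 = 0 := by
        rw [norm_sub_sq_real, hu1, hu2, ← hc]; nlinarith
      have h2 : u1 - u2 = 0 := by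
        by_contra hz
        have := norm_pos_iff.mpr hz
        nlinarith
      exact sub_eq_zero.mp h2
    · apply hne'
      have : ‖u1 + u2‖ ^ 2 = 0 := by
        rw [norm_add_sq_real, hu1, hu2, ← hc]; nlinarith
      have h2 : u1 + u2 = 0 := by
        by_contra hz
        have := norm_pos_iff.mpr hz
        nlinarith
      exact eq_neg_of_add_eq_zero_left h2
  -- the intersection point S of the two tangent lines
  set h1 : ℝ := ⟪P1, u1⟫ with hh1
  set h2 : ℝ := ⟪P2, u2⟫ with hh2
  have hd : (0:ℝ) < 1 - c ^ 2 := by nlinarith [sq_nonneg σ, sq_pos_of_ne_zero hσ]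
  set d : ℝ := 1 - c ^ 2 with hddef
  set S : E2 := ((h1 - h2 * c) / d) • u1 + ((h2 - h1 * c) / d) • u2 with hSdef
  have hu1u1 : ⟪u1, u1⟫ = 1 := by rw [real_inner_self_eq_norm_sq, hu1]; norm_num
  have hu2u2 : ⟪u2, u2⟫ = 1 := by rw [real_inner_self_eq_norm_sq, hu2]; norm_num
  have hu2u1 : ⟪u2, u1⟫ = c := (real_inner_comm u1 u2).trans hc.symm
  have hS1 : ⟪S, u1⟫ = h1 := by
    rw [hSdef, inner_add_left, real_inner_smul_left, real_inner_smul_left, hu1u1, hu2u1]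
    field_simp
    ring
  have hS2 : ⟪S, u2⟫ = h2 := by
    rw [hSdef, inner_add_left, real_inner_smul_left, real_inner_smul_left, hu2u2, ← hc]
    field_simp
    ring
  have hSC : S ∉ C := by
    intro hSmem
    have e1 : S = P1 := max_unique hstrict (by intro h; rw [h, norm_zero] at hu1; norm_num at hu1)
      hP1 hSmem hmax1 (by rw [hS1])
    have e2 : S = P2 := max_unique hstrict (by intro h; rw [h, norm_zero] at hu2; norm_num at hu2)
      hP2 hSmem hmax2 (by rw [hS2])
    exact hPP (e1 ▸ e2 ▸ rfl)
  have hdist := hiso S hSC P1 P2 (tangent_of_max hu1 hP1 hmax1 hS1)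
    (tangent_of_max hu2 hP2 hmax2 hS2)
  -- tangent vectors
  set v1 : E2 := P1 - S with hv1
  set v2 : E2 := P2 - S with hv2
  have hv1u1 : v1 0 * a + v1 1 * b = 0 := by
    have : ⟪v1, u1⟫ = 0 := by rw [hv1, inner_sub_left, hS1, hh1, sub_self]
    rw [inner2, ← ha, ← hb] at this; linarith
  have hv2u2 : v2 0 * p + v2 1 * q = 0 := by
    have : ⟪v2, u2⟫ = 0 := by rw [hv2, inner_sub_left, hS2, hh2, sub_self]
    rw [inner2, ← hp, ← hq] at this; linarith
  set t1 : ℝ := v1 1 * a - v1 0 * b with ht1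
  set t2 : ℝ := v2 1 * p - v2 0 * q with ht2
  have hv10 : v1 0 = -t1 * b := by rw [ht1]; linear_combination (-(v1 0)) * hA + a * hv1u1
  have hv11 : v1 1 = t1 * a := by rw [ht1]; linear_combination (-(v1 1)) * hA + b * hv1u1
  have hv20 : v2 0 = -t2 * q := by rw [ht2]; linear_combination (-(v2 0)) * hB + p * hv2u2
  have hv21 : v2 1 = t2 * p := by rw [ht2]; linear_combination (-(v2 1)) * hB + q * hv2u2
  -- equal lengths
  have hlen : t1 ^ 2 = t2 ^ 2 := by
    have e1 : dist S P1 ^ 2 = v1 0 ^ 2 + v1 1 ^ 2 := by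
      rw [dist_eq_norm, norm_sub_rev, ← hv1, norm2]
    have e2 : dist S P2 ^ 2 = v2 0 ^ 2 + v2 1 ^ 2 := by
      rw [dist_eq_norm, norm_sub_rev, ← hv2, norm2]
    have : v1 0 ^ 2 + v1 1 ^ 2 = v2 0 ^ 2 + v2 1 ^ 2 := by
      rw [← e1, ← e2, hdist]
    rw [hv10, hv11, hv20, hv21] at this
    linear_combination this - t1^2*hA + t2^2*hB
  -- sign conditions
  have hsign1 : t1 * σ < 0 := by
    have hlt : ⟪P1, u2⟫ < h2 := by
      rcases lt_or_eq_of_le (hmax2 P1 hP1) with h | h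
      · exact h
      · exact absurd (max_unique hstrict
          (by intro hz; rw [hz, norm_zero] at hu2; norm_num at hu2) hP2 hP1 hmax2 h) hPP
    have : ⟪v1, u2⟫ < 0 := by rw [hv1, inner_sub_left, hS2]; linarith
    rw [inner2, hv10, hv11, ← hp, ← hq] at this
    rw [hσdef]; nlinarith [this]
  have hsign2 : t2 * σ > 0 := by
    have hlt : ⟪P2, u1⟫ < h1 := by
      rcases lt_or_eq_of_le (hmax1 P2 hP2) with h | h
      · exact h
      · exact absurd (max_unique hstrict
          (by intro hz; rw [hz, norm_zero] at hu1; norm_num at hu1) hP1 hP2 hmax1 h) (Ne.symm hPP)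
    have : ⟪v2, u1⟫ < 0 := by rw [hv2, inner_sub_left, hS1]; linarith
    rw [inner2, hv20, hv21, ← ha, ← hb] at this
    rw [hσdef]; nlinarith [this]
  have ht12 : t2 = -t1 := by
    have hne12 : t1 ≠ t2 := by
      intro h; rw [h] at hsign1; linarith
    have : (t1 - t2) * (t1 + t2) = 0 := by nlinarith [hlen]
    rcases mul_eq_zero.mp this with h | h
    · exact absurd (by linarith : t1 = t2) hne12
    · linarith
  -- the final representation
  set m : ℝ := ‖u1 - u2‖ ^ 2 with hm
  have hm0 : 0 < m := by
    have : u1 - u2 ≠ 0 := sub_ne_zero.mpr hne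
    have := norm_pos_iff.mpr this
    positivity
  have hmab : m = (a - p) ^ 2 + (b - q) ^ 2 := by
    rw [hm, norm2, PiLp.sub_apply, PiLp.sub_apply, ← ha, ← hb, ← hp, ← hq]
  have key0 : v1 0 - v2 0 = (-2 * t1 * σ / m) * (u1 0 - u2 0) := by
    rw [← ha, ← hp, hv10, hv20, ht12, div_mul_eq_mul_div, eq_div_iff (ne_of_gt hm0), hmab, hσdef]
    linear_combination (2*t1*q - t1*(b+q)) * hA + (2*t1*b - t1*(b+q)) * hB
  have key1 : v1 1 - v2 1 = (-2 * t1 * σ / m) * (u1 1 - u2 1) := by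
    rw [← hb, ← hq, hv11, hv21, ht12, div_mul_eq_mul_div, eq_div_iff (ne_of_gt hm0), hmab, hσdef]
    linear_combination (-2*t1*p + t1*(a+p)) * hA + (-2*t1*a + t1*(a+p)) * hB
  have hρ : 0 < -2 * t1 * σ / m := by
    apply div_pos _ hm0
    have h' : (0:ℝ) < -(t1*σ) := neg_pos.mpr hsign1
    have he : -2*t1*σ = 2 * (-(t1*σ)) := by ring
    rw [he]; linarith
  have hPv : P1 - P2 = v1 - v2 := by rw [hv1, hv2, sub_sub_sub_cancel_right]
  clear hv1 hv2 hSdef hv1u1 hv2u2 hv10 hv11 hv20 hv21 ht1 ht2 hdist hsign1 hsign2 ht12 hσ hσdef hcσ hlen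
  clear_value v1 v2 S t1 t2 σ m a b p q c h1 h2 d
  refine ⟨-2 * t1 * σ / m, le_of_lt hρ, ?_⟩
  rw [hPv]
  exact vec_ext key0 key1

/-- If every cap of a compact strictly convex body `C` in the plane is
isosceles (the two tangent segments from any exterior point have equal
length), then `C` is a closed disc. -/
theorem strictlyConvex_isosceles_caps_imp_disc
    (C : Set (EuclideanSpace ℝ (Fin 2)))
    (hcomp : IsCompact C) (hconv : Convex ℝ C)
    (hint : (interior C).Nonempty) (hstrict : StrictConvex ℝ C)
    (hiso : ∀ S ∉ C, ∀ P Q : EuclideanSpace ℝ (Fin 2),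
      IsTangentAt C S P → IsTangentAt C S Q → dist S P = dist S Q) :
    ∃ (O : EuclideanSpace ℝ (Fin 2)) (r : ℝ), 0 < r ∧
      C = Metric.closedBall O r := by
  classical
  have hCne : C.Nonempty := ⟨hint.choose, interior_subset hint.choose_spec⟩
  have hTex : ∀ u : E2, ∃ P : E2, ‖u‖ = 1 → P ∈ C ∧ ∀ x ∈ C, ⟪x, u⟫ ≤ ⟪P, u⟫ := by
    intro u
    by_cases hu : ‖u‖ = 1
    · obtain ⟨P, hP, hm⟩ := exists_max hcomp hCne u
      exact ⟨P, fun _ => ⟨hP, hm⟩⟩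
    · exact ⟨0, fun h => absurd h hu⟩
  choose T hT using hTex
  have hTmem : ∀ u, ‖u‖ = 1 → T u ∈ C := fun u hu => (hT u hu).1
  have hTmax : ∀ u, ‖u‖ = 1 → ∀ x ∈ C, ⟪x, u⟫ ≤ ⟪T u, u⟫ := fun u hu => (hT u hu).2
  have hpair : ∀ u v : E2, ‖u‖ = 1 → ‖v‖ = 1 → u ≠ v → u ≠ -v →
      ∃ ρ : ℝ, 0 ≤ ρ ∧ T u - T v = ρ • (u - v) :=
    fun u v hu hv h h' =>
      pair_lemma hstrict hiso hu hv h h' (hTmem u hu) (hTmem v hv) (hTmax u hu) (hTmax v hv)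
  have htrip : ∀ u v w : E2, ‖u‖ = 1 → ‖v‖ = 1 → ‖w‖ = 1 →
      u ≠ v → u ≠ w → v ≠ w → v ≠ -w →
      ∀ ρuv ρuw : ℝ, T u - T v = ρuv • (u - v) → T u - T w = ρuw • (u - w) → ρuv = ρuw := by
    intro u v w hu hv hw huv huw hvw hvw' ρuv ρuw e1 e2
    obtain ⟨ρvw, -, e3⟩ := hpair v w hv hw hvw hvw'
    have h4 : ρuw • (u - w) - ρvw • (v - w) - ρuv • (u - v) = 0 := by
      rw [← e1, ← e2, ← e3]; abel
    have hrel : (ρuw - ρuv) • (u - v) + (ρvw - ρuw) • (w - v) = 0 := by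
      linear_combination (norm := module) h4
    obtain ⟨ha, -⟩ := cocycle hu hv hw huv huw hvw hrel
    linarith
  -- base directions
  set E1 : E2 := EuclideanSpace.single 0 (1:ℝ) with hE1
  set E2v : E2 := EuclideanSpace.single 1 (1:ℝ) with hE2v
  have hnE1 : ‖E1‖ = 1 := by rw [hE1, EuclideanSpace.norm_single]; norm_num
  have hnE2 : ‖E2v‖ = 1 := by rw [hE2v, EuclideanSpace.norm_single]; norm_num
  have hE1c : E1 0 = 1 := by rw [hE1]; simp [EuclideanSpace.single_apply]
  have hE2c : E2v 0 = 0 := by rw [hE2v]; simp [EuclideanSpace.single_apply]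
  have hne12 : E1 ≠ E2v := by
    intro h
    have := congrArg (fun z : E2 => z 0) h
    simp only at this
    rw [hE1c, hE2c] at this; norm_num at this
  have hne12' : E1 ≠ -E2v := by
    intro h
    have := congrArg (fun z : E2 => z 0) h
    simp only [PiLp.neg_apply] at this
    rw [hE1c, hE2c] at this; norm_num at this
  obtain ⟨r, hr0, hrE⟩ := hpair E1 E2v hnE1 hnE2 hne12 hne12'
  set O : E2 := T E1 - r • E1 with hO
  -- generic directions
  have hgen : ∀ u : E2, ‖u‖ = 1 → u ≠ E1 → u ≠ -E1 → u ≠ E2v → u ≠ -E2v →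
      T u = O + r • u := by
    intro u hu h1 h2 h3 h4
    have hE1u : E1 ≠ u := Ne.symm h1
    have hE1u' : E1 ≠ -u := fun h => h2 (by rw [h, neg_neg])
    have hE2u : E2v ≠ u := Ne.symm h3
    have hE2u' : E2v ≠ -u := fun h => h4 (by rw [h, neg_neg])
    obtain ⟨ρ1, -, hρ1⟩ := hpair E1 u hnE1 hu hE1u hE1u'
    have heq := htrip E1 E2v u hnE1 hnE2 hu hne12 hE1u hE2u hE2u' r ρ1 hrE hρ1
    rw [← heq] at hρ1
    rw [hO]
    exact rearr hρ1
  -- all unit directions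
  have hall : ∀ u : E2, ‖u‖ = 1 → T u = O + r • u := by
    intro u hu
    have hFfin : ({E1, -E1, E2v, -E2v, u, -u} : Set E2).Finite :=
      (((((Set.finite_singleton (-u)).insert u).insert (-E2v)).insert E2v).insert (-E1)).insert E1
    obtain ⟨w1, hw1u, hw1F⟩ := exists_unit_avoid _ hFfin
    simp only [Set.mem_insert_iff, Set.mem_singleton_iff, not_or] at hw1F
    obtain ⟨hwa, hwb, hwc, hwd, hwe, hwf⟩ := hw1F
    have hGfin : ({E1, -E1, E2v, -E2v, u, -u, w1, -w1} : Set E2).Finite :=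
      (((((((Set.finite_singleton (-w1)).insert w1).insert (-u)).insert u).insert
        (-E2v)).insert E2v).insert (-E1)).insert E1
    obtain ⟨w2, hw2u, hw2F⟩ := exists_unit_avoid _ hGfin
    simp only [Set.mem_insert_iff, Set.mem_singleton_iff, not_or] at hw2F
    obtain ⟨hva, hvb, hvc, hvd, hve, hvf, hvg, hvh⟩ := hw2F
    have hw1T : T w1 = O + r • w1 := hgen w1 hw1u hwa hwb hwc hwd
    have hw2T : T w2 = O + r • w2 := hgen w2 hw2u hva hvb hvc hvd
    have h12 : T w1 - T w2 = r • (w1 - w2) := by rw [hw1T, hw2T]; exact subpt O w1 w2 r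
    have hww : w1 ≠ w2 := Ne.symm hvg
    obtain ⟨ρ1, -, hρ1⟩ := hpair w1 u hw1u hu hwe hwf
    have heq := htrip w1 w2 u hw1u hw2u hu hww hwe hve hvf r ρ1 h12 hρ1
    rw [← heq] at hρ1
    have h3 := rearr hρ1
    have h4 : T w1 - r • w1 = O := by rw [hw1T, add_sub_cancel_right]
    rw [h3, h4]
  -- positivity of r
  have hrpos : 0 < r := by
    rcases lt_or_eq_of_le hr0 with h | h
    · exact h
    · exfalso
      have hTO : ∀ u : E2, ‖u‖ = 1 → T u = O := by
        intro u hu; rw [hall u hu, ← h, zero_smul, add_zero]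
      have hsub : C ⊆ {O} := by
        intro x hx
        simp only [Set.mem_singleton_iff]
        by_contra hxO
        have hxO' : x - O ≠ 0 := sub_ne_zero.mpr hxO
        set u : E2 := ‖x - O‖⁻¹ • (x - O) with hudef
        have hu : ‖u‖ = 1 := norm_smul_inv_norm hxO'
        have h5 := hTmax u hu x hx
        rw [hTO u hu] at h5
        have h6 : ⟪x - O, u⟫ ≤ 0 := by rw [inner_sub_left]; linarith
        rw [hudef, real_inner_smul_right, real_inner_self_eq_norm_sq] at h6
        have h7 : 0 < ‖x - O‖ := norm_pos_iff.mpr hxO'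
        nlinarith [h6, mul_pos (inv_pos.mpr h7) (pow_pos h7 2)]
      obtain ⟨x0, hx0⟩ := hint
      obtain ⟨ε, hε, hball⟩ := Metric.mem_nhds_iff.mp (mem_interior_iff_mem_nhds.mp hx0)
      have hx0O : x0 = O := hsub (interior_subset hx0)
      have hy : x0 + (ε/2) • E1 ∈ C := by
        apply hball
        simp only [Metric.mem_ball, dist_eq_norm, add_sub_cancel_left, norm_smul,
          Real.norm_eq_abs, hnE1]
        rw [abs_of_pos (by linarith)]
        linarith
      have h8 := hsub hy
      simp only [Set.mem_singleton_iff] at h8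
      rw [hx0O] at h8
      have h9 : (ε/2) • E1 = (0:E2) := by
        have := h8
        nth_rewrite 2 [← add_zero O] at this
        exact add_left_cancel this
      rcases smul_eq_zero.mp h9 with h10 | h10
      · linarith
      · rw [h10, norm_zero] at hnE1; norm_num at hnE1
  refine ⟨O, r, hrpos, ?_⟩
  apply Set.Subset.antisymm
  · intro x hx
    rw [Metric.mem_closedBall]
    by_cases hxO : x = O
    · rw [hxO, dist_self]; linarith
    · have hxO' : x - O ≠ 0 := sub_ne_zero.mpr hxO
      set u : E2 := ‖x - O‖⁻¹ • (x - O) with hudef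
      have hu : ‖u‖ = 1 := norm_smul_inv_norm hxO'
      have huu : ⟪u, u⟫ = 1 := by rw [real_inner_self_eq_norm_sq, hu]; norm_num
      have h5 := hTmax u hu x hx
      rw [hall u hu, inner_add_left, real_inner_smul_left, huu, mul_one] at h5
      have h6 : ⟪x - O, u⟫ ≤ r := by rw [inner_sub_left]; linarith
      rw [hudef, real_inner_smul_right, real_inner_self_eq_norm_sq] at h6
      have h7 : 0 < ‖x - O‖ := norm_pos_iff.mpr hxO'
      rw [sq, ← mul_assoc, inv_mul_cancel₀ (ne_of_gt h7), one_mul] at h6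
      rw [dist_eq_norm]
      exact h6
  · intro y hy
    rw [Metric.mem_closedBall, dist_eq_norm] at hy
    by_cases hyO : y = O
    · have hnE1' : ‖-E1‖ = 1 := by rw [norm_neg]; exact hnE1
      have hA : T E1 ∈ C := hTmem E1 hnE1
      have hB : T (-E1) ∈ C := hTmem _ hnE1'
      have hTA : T E1 = O + r • E1 := hall E1 hnE1
      have hTB : T (-E1) = O - r • E1 := by rw [hall _ hnE1', smul_neg]; abel
      have hmem := hconv hA hB (by norm_num : (0:ℝ) ≤ 1/2) (by norm_num : (0:ℝ) ≤ 1/2)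
        (by norm_num : (1/2:ℝ) + 1/2 = 1)
      rw [hTA, hTB] at hmem
      have hmid : (1/2:ℝ) • (O + r • E1) + (1/2:ℝ) • (O - r • E1) = O := by module
      rw [hmid] at hmem
      rw [hyO]; exact hmem
    · have hyO' : y - O ≠ 0 := sub_ne_zero.mpr hyO
      set s : ℝ := ‖y - O‖ with hs
      have hs0 : 0 < s := norm_pos_iff.mpr hyO'
      set v : E2 := s⁻¹ • (y - O) with hv
      have hvu : ‖v‖ = 1 := norm_smul_inv_norm hyO'
      have hvu' : ‖-v‖ = 1 := by rw [norm_neg]; exact hvu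
      have hA : T v ∈ C := hTmem v hvu
      have hB : T (-v) ∈ C := hTmem _ hvu'
      have hTA : T v = O + r • v := hall v hvu
      have hTB : T (-v) = O - r • v := by rw [hall _ hvu', smul_neg]; abel
      have hr' : r ≠ 0 := ne_of_gt hrpos
      set α : ℝ := (r + s)/(2*r) with hα
      set β : ℝ := (r - s)/(2*r) with hβ
      have hα0 : 0 ≤ α := div_nonneg (by linarith) (by linarith)
      have hβ0 : 0 ≤ β := div_nonneg (by linarith) (by linarith)
      have hαβ : α + β = 1 := by rw [hα, hβ]; field_simp; ring
      have hmem := hconv hA hB hα0 hβ0 hαβ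
      rw [hTA, hTB] at hmem
      have hcomb : α • (O + r • v) + β • (O - r • v) = (α + β) • O + ((α - β) * r) • v := by
        module
      have hab : (α - β) * r = s := by rw [hα, hβ]; field_simp; ring
      have hyv : y = O + s • v := by
        rw [hv, smul_smul, mul_inv_cancel₀ (ne_of_gt hs0), one_smul]; abel
      rw [hcomb, hαβ, one_smul, hab, ← hyv] at hmem
      exact hmem
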